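/- There exists a constant C > 0 depending only on ā and T such that, on the Shishkin mesh (with ρ = min(T/2, ā⁻¹ ε ln N)): Σ_{j=1}^{N} ∫_{ξ_{j−1}}^{ξ_j} (ξ_j − τ)(τ − ξ_{j−1}) ε⁻² e^{−ā τ/ε} dτ ≤ C N⁻² ln N. -/

import Mathlib

lemma my_sum_Ioc_eq_range (g : ℕ → ℝ) (s n : ℕ) :
    ∑ j ∈ Finset.Ioc s (s + n), g j = ∑ k ∈ Finset.range n, g (s + k + 1) := by
  induction n with
  | zero => simp
  | succ n ih =>
      rw [show s + (n+1) = (s+n) + 1 by omega, Finset.sum_Ioc_succ_top (by omega), ih,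
        Finset.sum_range_succ]

lemma my_exp_integral (c d a b : ℝ) (hc : c ≠ 0) :
    ∫ x in a..b, Real.exp (d - c * x)
      = (Real.exp (d - c * a) - Real.exp (d - c * b)) / c := by
  have h : ∀ x ∈ Set.uIcc a b,
      HasDerivAt (fun y => -Real.exp (d - c * y) / c) (Real.exp (d - c * x)) x := by
    intro x _
    have h1 : HasDerivAt (fun y : ℝ => d - c * y) (-c) x := by
      simpa using ((hasDerivAt_id x).const_mul c).const_sub d
    have h2 := (Real.hasDerivAt_exp (d - c * x)).comp x h1
    have h3 := (h2.neg).div_const c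
    convert h3 using 1
    · rfl
    · rfl
    · rfl
    · field_simp
  have hint : IntervalIntegrable (fun x => Real.exp (d - c * x)) MeasureTheory.volume a b := by
    apply Continuous.intervalIntegrable
    fun_prop
  rw [intervalIntegral.integral_eq_sub_of_hasDerivAt h hint]
  ring

lemma my_exp_integral_le (c d a b : ℝ) (hc : 0 < c) (hab : a ≤ b) :
    ∫ x in a..b, Real.exp (d - c * x) ≤ Real.exp (d - c * a) / c := by
  rw [my_exp_integral c d a b hc.ne']
  have := Real.exp_nonneg (d - c * b)
  gcongr
  linarith


/-- Shishkin transition point `ρ = min(T/2, ā⁻¹ ε ln N)`. -/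
noncomputable def sRho (T abar ε : ℝ) (N : ℕ) : ℝ :=
  min (T / 2) (abar⁻¹ * ε * Real.log N)

/-- Fine step size `h⁽¹⁾ = 2ρ/N`. -/
noncomputable def sH1 (T abar ε : ℝ) (N : ℕ) : ℝ := 2 * sRho T abar ε N / N

/-- Coarse step size `h⁽²⁾ = 2(T−ρ)/N`. -/
noncomputable def sH2 (T abar ε : ℝ) (N : ℕ) : ℝ :=
  2 * (T - sRho T abar ε N) / N

/-- Shishkin mesh points `ξ_i`. -/
noncomputable def sXi (T abar ε : ℝ) (N i : ℕ) : ℝ :=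
  if i ≤ N / 2 then (i : ℝ) * sH1 T abar ε N
  else sRho T abar ε N + ((i : ℝ) - (N : ℝ) / 2) * sH2 T abar ε N

set_option maxHeartbeats 1000000 in
/-- full quadrature sum bound
`Σ_{j=1}^{N} ∫_{ξ_{j−1}}^{ξ_j} (ξ_j−τ)(τ−ξ_{j−1}) ε⁻² e^{−ā τ/ε} dτ ≤ C N⁻² ln N`
on the Shishkin mesh, with `C` depending only on `ā` and `T`. -/
theorem full_quadrature_sum_bound
    (abar T : ℝ) (habar : 0 < abar) (hT : 0 < T) :
    ∃ C : ℝ, 0 < C ∧ ∀ (ε : ℝ) (N : ℕ), 0 < ε → ε ≤ 1 → 4 ≤ N → Even N →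
      (∑ j ∈ Finset.Icc 1 N,
          ∫ τ in sXi T abar ε N (j - 1)..sXi T abar ε N j,
            (sXi T abar ε N j - τ) * (τ - sXi T abar ε N (j - 1)) *
              ((ε ^ 2)⁻¹ * Real.exp (-(abar * τ) / ε)))
        ≤ C * ((N : ℝ) ^ 2)⁻¹ * Real.log N := by
  refine ⟨1000 * (T + 1) / abar ^ 2, by positivity, ?_⟩
  intro ε N hε hε1 hN4 hNeven
  obtain ⟨m, hNm⟩ := hNeven
  subst hNm
  set n : ℕ := m + m with hn
  have hm2 : 2 ≤ m := by omega
  have hm0 : (0:ℝ) < (m:ℝ) := by exact_mod_cast Nat.pos_of_ne_zero (by omega)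
  have hn4 : (4:ℝ) ≤ (n:ℝ) := by exact_mod_cast hN4
  have hnpos : (0:ℝ) < (n:ℝ) := by linarith
  have hnR : (n:ℝ) = 2 * m := by rw [hn]; push_cast; ring
  set L : ℝ := Real.log n with hLdef
  have hL1 : 1 ≤ L := by
    rw [hLdef, Real.le_log_iff_exp_le (by linarith)]
    have := Real.exp_one_lt_d9
    linarith
  have hLpos : 0 < L := by linarith
  set r : ℝ := sRho T abar ε n with hrdef
  have hr2T : r ≤ T / 2 := min_le_left _ _
  have hrεL : r ≤ abar⁻¹ * ε * L := min_le_right _ _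
  have hrpos : 0 < r := by
    apply lt_min (by linarith)
    have h0 : 0 < abar⁻¹ * ε := mul_pos (inv_pos.mpr habar) hε
    exact mul_pos h0 hLpos
  set H1 : ℝ := sH1 T abar ε n with hH1def
  have hH1 : H1 = 2 * r / n := rfl
  set H2 : ℝ := sH2 T abar ε n with hH2def
  have hH2 : H2 = 2 * (T - r) / n := rfl
  have hH1pos : 0 < H1 := by rw [hH1]; positivity
  have hH2pos : 0 < H2 := by rw [hH2]; apply div_pos (by linarith) hnpos
  have hH2le : H2 ≤ 2 * T / n := by
    rw [hH2]
    gcongr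
    linarith
  have hhalf : n / 2 = m := by omega
  set X : ℕ → ℝ := sXi T abar ε n with hXdef
  have hXfine : ∀ i, i ≤ m → X i = (i:ℝ) * H1 := by
    intro i hi
    rw [hXdef]; unfold sXi; rw [hhalf, if_pos hi]
  have hX0 : X 0 = 0 := by rw [hXfine 0 (by omega)]; simp
  have hXm : X m = r := by
    rw [hXfine m le_rfl, hH1, hnR]; field_simp
  have hXcoarse : ∀ k, k ≤ m → X (m + k) = r + (k:ℝ) * H2 := by
    intro k hk
    rcases Nat.eq_zero_or_pos k with h0 | h0
    · subst h0; simpa using hXm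
    · rw [hXdef]; unfold sXi
      rw [hhalf, if_neg (by omega), ← hrdef, ← hH2def]
      push_cast
      rw [hnR]
      ring
  have hXn : X n = T := by
    have := hXcoarse m le_rfl
    rw [show m + m = n from rfl] at this
    rw [this, hH2, hnR]; field_simp; ring
  have hstep1 : ∀ k, k < m → X (k + 1) = X k + H1 := by
    intro k hk
    rw [hXfine k (by omega), hXfine (k+1) (by omega)]
    push_cast; ring
  have hstep2 : ∀ k, k < m → X (m + k + 1) = X (m + k) + H2 := by
    intro k hk
    rw [show m + k + 1 = m + (k + 1) from rfl, hXcoarse (k+1) (by omega),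
      hXcoarse k (by omega)]
    push_cast; ring
  have hXger : ∀ k, k ≤ m → r ≤ X (m + k) := by
    intro k hk
    rw [hXcoarse k hk]
    have : (0:ℝ) ≤ (k:ℝ) * H2 := by positivity
    linarith
  set g : ℕ → ℝ := fun j => ∫ τ in X (j-1)..X j,
      (X j - τ) * (τ - X (j-1)) * ((ε ^ 2)⁻¹ * Real.exp (-(abar * τ) / ε)) with hgdef
  show (∑ j ∈ Finset.Icc 1 n, g j) ≤ 1000 * (T + 1) / abar ^ 2 * ((n:ℝ) ^ 2)⁻¹ * L
  have hsplit : ∑ j ∈ Finset.Icc 1 n, g j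
      = ∑ k ∈ Finset.range m, g (k + 1) + ∑ k ∈ Finset.range m, g (m + k + 1) := by
    have hIcc : Finset.Icc 1 n = Finset.Ioc 0 n := by
      ext j; simp; omega
    rw [hIcc, ← Finset.sum_Ioc_consecutive g (by omega : 0 ≤ m) (by omega : m ≤ n)]
    congr 1
    · simpa using my_sum_Ioc_eq_range g 0 m
    · have := my_sum_Ioc_eq_range g m m
      rw [← hn] at this
      exact this
  clear_value n L r H1 H2 X g
  have hcontF : ∀ p q : ℝ, Continuous (fun τ : ℝ =>
      (p - τ) * (τ - q) * ((ε ^ 2)⁻¹ * Real.exp (-(abar * τ) / ε))) := by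
    intro p q; fun_prop
  -- fine part
  have hG1 : ∀ k < m, g (k + 1) ≤ ∫ τ in X k..X (k + 1),
      H1 * H1 * ((ε ^ 2)⁻¹ * Real.exp (-(abar * τ) / ε)) := by
    intro k hk
    rw [hgdef]
    simp only [Nat.add_sub_cancel]
    have hs := hstep1 k hk
    have hab : X k ≤ X (k + 1) := by linarith
    apply intervalIntegral.integral_mono_on hab ((hcontF _ _).intervalIntegrable _ _)
      ((by fun_prop : Continuous (fun τ : ℝ =>
        H1 * H1 * ((ε ^ 2)⁻¹ * Real.exp (-(abar * τ) / ε)))).intervalIntegrable _ _)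
    intro τ hτ
    obtain ⟨h1τ, h2τ⟩ := hτ
    have hE : 0 ≤ (ε ^ 2)⁻¹ * Real.exp (-(abar * τ) / ε) := by positivity
    have e1 : X (k + 1) - τ ≤ H1 := by linarith
    have e2 : τ - X k ≤ H1 := by linarith
    have e0 : 0 ≤ τ - X k := by linarith
    exact mul_le_mul_of_nonneg_right (mul_le_mul e1 e2 e0 hH1pos.le) hE
  have hfine : ∑ k ∈ Finset.range m, g (k + 1) ≤ 2 * T * L / (abar ^ 2 * (n:ℝ) ^ 2) := by
    calc ∑ k ∈ Finset.range m, g (k + 1)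
        ≤ ∑ k ∈ Finset.range m, ∫ τ in X k..X (k + 1),
            H1 * H1 * ((ε ^ 2)⁻¹ * Real.exp (-(abar * τ) / ε)) :=
          Finset.sum_le_sum fun k hk => hG1 k (Finset.mem_range.mp hk)
      _ = ∫ τ in (X 0)..(X m), H1 * H1 * ((ε ^ 2)⁻¹ * Real.exp (-(abar * τ) / ε)) :=
          intervalIntegral.sum_integral_adjacent_intervals fun k _ =>
            (by fun_prop : Continuous (fun τ : ℝ =>
              H1 * H1 * ((ε ^ 2)⁻¹ * Real.exp (-(abar * τ) / ε)))).intervalIntegrable _ _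
      _ = H1 * H1 * (ε ^ 2)⁻¹ * ∫ τ in (0:ℝ)..r, Real.exp (0 - abar / ε * τ) := by
          rw [hX0, hXm, ← intervalIntegral.integral_const_mul]
          apply intervalIntegral.integral_congr
          intro τ _
          show H1 * H1 * ((ε ^ 2)⁻¹ * Real.exp (-(abar * τ) / ε))
              = H1 * H1 * (ε ^ 2)⁻¹ * Real.exp (0 - abar / ε * τ)
          rw [show -(abar * τ) / ε = 0 - abar / ε * τ by ring]
          ring
      _ ≤ H1 * H1 * (ε ^ 2)⁻¹ * (Real.exp (0 - abar / ε * 0) / (abar / ε)) := by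
          apply mul_le_mul_of_nonneg_left
            (my_exp_integral_le _ _ _ _ (by positivity) hrpos.le) (by positivity)
      _ ≤ 2 * T * L / (abar ^ 2 * (n:ℝ) ^ 2) := by
          have hr2 : r * r ≤ T / 2 * (abar⁻¹ * ε * L) :=
            mul_le_mul hr2T hrεL hrpos.le (by linarith)
          have key : 2 * abar * (r * r) ≤ T * (ε * L) := by
            have h := mul_le_mul_of_nonneg_left hr2 (by positivity : (0:ℝ) ≤ 2 * abar)
            calc 2 * abar * (r * r) ≤ 2 * abar * (T / 2 * (abar⁻¹ * ε * L)) := h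
              _ = T * (ε * L) := by field_simp
          rw [hH1]
          norm_num
          have hLHS : 2 * r / (n:ℝ) * (2 * r / (n:ℝ)) * (ε ^ 2)⁻¹ * (ε / abar)
              = 4 * (r * r) / ((n:ℝ) ^ 2 * ε * abar) := by
            field_simp
            ring
          rw [hLHS, div_le_div_iff₀ (by positivity) (by positivity)]
          have hkey2 := mul_le_mul_of_nonneg_right key
            (by positivity : (0:ℝ) ≤ 2 * abar * (n:ℝ) ^ 2)
          have e1 : 2 * abar * (r * r) * (2 * abar * (n:ℝ) ^ 2)
              = 4 * (r * r) * (abar ^ 2 * (n:ℝ) ^ 2) := by ring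
          have e2 : T * (ε * L) * (2 * abar * (n:ℝ) ^ 2)
              = 2 * T * L * ((n:ℝ) ^ 2 * ε * abar) := by ring
          linarith
  -- coarse part
  have hcoarse : ∑ k ∈ Finset.range m, g (m + k + 1) ≤ 8 * T * L / (abar ^ 2 * (n:ℝ) ^ 2) := by
    by_cases hc : abar⁻¹ * ε * L ≤ T / 2
    · -- Case A : r = abar⁻¹ ε log N
      have hrA : r = abar⁻¹ * ε * L := by
        rw [hrdef]; unfold sRho; rw [← hLdef]; exact min_eq_right hc
      have hexp_r : Real.exp (-(abar * r) / ε) = ((n:ℝ))⁻¹ := by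
        have hre : -(abar * r) / ε = -L := by rw [hrA]; field_simp
        rw [hre, Real.exp_neg, hLdef, Real.exp_log hnpos]
      have hcontG2 : Continuous (fun τ : ℝ =>
          2 * H2 / (abar * ε) * Real.exp (-(abar * r) / (2 * ε) - abar / (2 * ε) * τ)) := by
        fun_prop
      have hG2 : ∀ k < m, g (m + k + 1) ≤ ∫ τ in (X (m + k))..(X (m + k + 1)),
          2 * H2 / (abar * ε) * Real.exp (-(abar * r) / (2 * ε) - abar / (2 * ε) * τ) := by
        intro k hk
        rw [hgdef]
        simp only [Nat.add_sub_cancel]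
        have hs := hstep2 k hk
        have hge := hXger k hk.le
        have hab : X (m + k) ≤ X (m + k + 1) := by linarith
        apply intervalIntegral.integral_mono_on hab ((hcontF _ _).intervalIntegrable _ _)
          (hcontG2.intervalIntegrable _ _)
        rintro τ ⟨h1τ, h2τ⟩
        have hτr : r ≤ τ := le_trans hge h1τ
        set s : ℝ := abar * (τ - r) / (2 * ε) with hsdef
        have hs0 : 0 ≤ s := by
          apply div_nonneg (mul_nonneg habar.le (by linarith)) (by positivity)
        have hse : s ≤ Real.exp s := by linarith [Real.add_one_le_exp s]
        have hsexp : s * Real.exp (-s) ≤ 1 := by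
          have h1 : s * Real.exp (-s) ≤ Real.exp s * Real.exp (-s) :=
            mul_le_mul_of_nonneg_right hse (Real.exp_nonneg _)
          rw [← Real.exp_add] at h1
          simpa using h1
        have hdecomp : Real.exp (-(abar * τ) / ε)
            = Real.exp (-(abar * r) / (2 * ε) - abar / (2 * ε) * τ) * Real.exp (-s) := by
          rw [← Real.exp_add]
          congr 1
          rw [hsdef]
          field_simp
          ring
        have hτrs : τ - r = 2 * ε * s / abar := by rw [hsdef]; field_simp
        calc (X (m + k + 1) - τ) * (τ - X (m + k)) * ((ε ^ 2)⁻¹ * Real.exp (-(abar * τ) / ε))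
            ≤ H2 * (τ - r) * ((ε ^ 2)⁻¹ * Real.exp (-(abar * τ) / ε)) := by
              have e1 : X (m + k + 1) - τ ≤ H2 := by linarith
              have e2 : τ - X (m + k) ≤ τ - r := by linarith
              have e0 : 0 ≤ τ - X (m + k) := by linarith
              have hE : 0 ≤ (ε ^ 2)⁻¹ * Real.exp (-(abar * τ) / ε) := by positivity
              exact mul_le_mul_of_nonneg_right (mul_le_mul e1 e2 e0 hH2pos.le) hE
          _ = 2 * H2 / (abar * ε) * Real.exp (-(abar * r) / (2 * ε) - abar / (2 * ε) * τ)
                * (s * Real.exp (-s)) := by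
              rw [hdecomp, hτrs]
              field_simp
          _ ≤ 2 * H2 / (abar * ε) * Real.exp (-(abar * r) / (2 * ε) - abar / (2 * ε) * τ) * 1 := by
              apply mul_le_mul_of_nonneg_left hsexp (by positivity)
          _ = 2 * H2 / (abar * ε) * Real.exp (-(abar * r) / (2 * ε) - abar / (2 * ε) * τ) := by
              ring
      calc ∑ k ∈ Finset.range m, g (m + k + 1)
          ≤ ∑ k ∈ Finset.range m, ∫ τ in (X (m + k))..(X (m + k + 1)),
              2 * H2 / (abar * ε) * Real.exp (-(abar * r) / (2 * ε) - abar / (2 * ε) * τ) :=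
            Finset.sum_le_sum fun k hk => hG2 k (Finset.mem_range.mp hk)
        _ = ∫ τ in (X (m + 0))..(X (m + m)),
              2 * H2 / (abar * ε) * Real.exp (-(abar * r) / (2 * ε) - abar / (2 * ε) * τ) :=
            intervalIntegral.sum_integral_adjacent_intervals (a := fun k => X (m + k))
              (fun k _ => hcontG2.intervalIntegrable _ _)
        _ = ∫ τ in r..T,
              2 * H2 / (abar * ε) * Real.exp (-(abar * r) / (2 * ε) - abar / (2 * ε) * τ) := by
            rw [← hn, show m + 0 = m by omega, hXm, hXn]
        _ = 2 * H2 / (abar * ε) * ∫ τ in r..T,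
              Real.exp (-(abar * r) / (2 * ε) - abar / (2 * ε) * τ) :=
            intervalIntegral.integral_const_mul _ _
        _ ≤ 2 * H2 / (abar * ε)
              * (Real.exp (-(abar * r) / (2 * ε) - abar / (2 * ε) * r) / (abar / (2 * ε))) := by
            apply mul_le_mul_of_nonneg_left
              (my_exp_integral_le _ _ _ _ (by positivity) (by linarith)) (by positivity)
        _ ≤ 8 * T * L / (abar ^ 2 * (n:ℝ) ^ 2) := by
            rw [show -(abar * r) / (2 * ε) - abar / (2 * ε) * r = -(abar * r) / ε by
              field_simp; ring]
            rw [hexp_r]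
            have hLHS : 2 * H2 / (abar * ε) * (((n:ℝ))⁻¹ / (abar / (2 * ε)))
                = 4 * H2 / (abar ^ 2 * (n:ℝ)) := by
              field_simp
              ring
            rw [hLHS]
            have h2n : H2 * (n:ℝ) = 2 * (T - r) := by rw [hH2]; field_simp
            have hH2T : H2 * (n:ℝ) ≤ 2 * T := by linarith
            rw [show 4 * H2 / (abar ^ 2 * (n:ℝ)) = 4 * (H2 * (n:ℝ)) / (abar ^ 2 * (n:ℝ) ^ 2) by
              field_simp]
            rw [div_le_div_iff₀ (by positivity) (by positivity)]
            apply mul_le_mul_of_nonneg_right ?_ (by positivity : (0:ℝ) ≤ abar ^ 2 * (n:ℝ) ^ 2)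
            have h8 : 8 * T * 1 ≤ 8 * T * L :=
              mul_le_mul_of_nonneg_left hL1 (by positivity)
            linarith
    · -- Case B : r = T/2
      have hrB : r = T / 2 := by
        rw [hrdef]; unfold sRho; rw [← hLdef]; exact min_eq_left (le_of_lt (not_le.mp hc))
      have hH2B : H2 = T / (n:ℝ) := by rw [hH2, hrB]; ring
      have hMτ : ∀ τ : ℝ, T / 2 ≤ τ →
          (ε ^ 2)⁻¹ * Real.exp (-(abar * τ) / ε) ≤ 16 / (abar ^ 2 * T ^ 2) := by
        intro τ hτ
        have hτpos : 0 < τ := by linarith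
        set u : ℝ := abar * τ / (2 * ε) with hudef
        have hu0 : 0 < u := by rw [hudef]; positivity
        have hue : u ≤ Real.exp u := by linarith [Real.add_one_le_exp u]
        have hsum : abar * τ / ε = u + u := by rw [hudef]; field_simp; ring
        have hexp2 : u * u ≤ Real.exp (abar * τ / ε) := by
          rw [hsum, Real.exp_add]
          exact mul_le_mul hue hue hu0.le (Real.exp_nonneg _)
        have hu2 : u * (2 * ε) = abar * τ := by rw [hudef]; field_simp
        have h3 : 16 * ε ^ 2 * (u * u) = 4 * (abar * τ) ^ 2 := by rw [← hu2]; ring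
        have hT2 : T ^ 2 ≤ 4 * τ ^ 2 := by
          have hp : (0:ℝ) ≤ (2 * τ - T) * (2 * τ + T) :=
            mul_nonneg (by linarith) (by linarith)
          have hp2 : (2 * τ - T) * (2 * τ + T) = 4 * τ ^ 2 - T ^ 2 := by ring
          linarith
        rw [show -(abar * τ) / ε = -(abar * τ / ε) by ring, Real.exp_neg, ← mul_inv,
          inv_eq_one_div, div_le_div_iff₀ (by positivity) (by positivity)]
        have hA := mul_le_mul_of_nonneg_left hexp2 (by positivity : (0:ℝ) ≤ 16 * ε ^ 2)
        have hB := mul_le_mul_of_nonneg_left hT2 (sq_nonneg abar)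
        have e1 : abar ^ 2 * (4 * τ ^ 2) = 4 * (abar * τ) ^ 2 := by ring
        linarith
      have hGB : ∀ k < m, g (m + k + 1) ≤ H2 * (H2 * H2 * (16 / (abar ^ 2 * T ^ 2))) := by
        intro k hk
        rw [hgdef]
        simp only [Nat.add_sub_cancel]
        have hs := hstep2 k hk
        have hge := hXger k hk.le
        have hab : X (m + k) ≤ X (m + k + 1) := by linarith
        have hconst : ∫ τ in (X (m + k))..(X (m + k + 1)),
            (H2 * H2 * (16 / (abar ^ 2 * T ^ 2)))
            = H2 * (H2 * H2 * (16 / (abar ^ 2 * T ^ 2))) := by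
          rw [intervalIntegral.integral_const, smul_eq_mul,
            show X (m + k + 1) - X (m + k) = H2 by linarith]
        rw [← hconst]
        apply intervalIntegral.integral_mono_on hab ((hcontF _ _).intervalIntegrable _ _)
          (intervalIntegrable_const)
        rintro τ ⟨h1τ, h2τ⟩
        have hτT2 : T / 2 ≤ τ := by rw [hrB] at hge; linarith
        have e1 : X (m + k + 1) - τ ≤ H2 := by linarith
        have e2 : τ - X (m + k) ≤ H2 := by linarith
        have e0 : 0 ≤ τ - X (m + k) := by linarith
        have hprod : (X (m + k + 1) - τ) * (τ - X (m + k)) ≤ H2 * H2 :=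
          mul_le_mul e1 e2 e0 hH2pos.le
        exact mul_le_mul hprod (hMτ τ hτT2) (by positivity) (by positivity)
      calc ∑ k ∈ Finset.range m, g (m + k + 1)
          ≤ ∑ _k ∈ Finset.range m, H2 * (H2 * H2 * (16 / (abar ^ 2 * T ^ 2))) :=
            Finset.sum_le_sum fun k hk => hGB k (Finset.mem_range.mp hk)
        _ = (m:ℝ) * (H2 * (H2 * H2 * (16 / (abar ^ 2 * T ^ 2)))) := by
            rw [Finset.sum_const, Finset.card_range, nsmul_eq_mul]
        _ ≤ 8 * T * L / (abar ^ 2 * (n:ℝ) ^ 2) := by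
            rw [hH2B]
            have hLHS : (m:ℝ) * (T / (n:ℝ) * (T / (n:ℝ) * (T / (n:ℝ))
                * (16 / (abar ^ 2 * T ^ 2))))
                = 16 * T * (m:ℝ) / (abar ^ 2 * (n:ℝ) ^ 3) := by
              field_simp
            rw [hLHS]
            rw [show 8 * T * L / (abar ^ 2 * (n:ℝ) ^ 2)
              = 8 * T * L * (n:ℝ) / (abar ^ 2 * (n:ℝ) ^ 3) by field_simp]
            rw [div_le_div_iff₀ (by positivity) (by positivity)]
            apply mul_le_mul_of_nonneg_right ?_ (by positivity : (0:ℝ) ≤ abar ^ 2 * (n:ℝ) ^ 3)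
            rw [hnR]
            have h16 : 16 * T * (m:ℝ) * 1 ≤ 16 * T * (m:ℝ) * L :=
              mul_le_mul_of_nonneg_left hL1 (by positivity)
            linarith
  -- assembly
  rw [hsplit]
  calc ∑ k ∈ Finset.range m, g (k + 1) + ∑ k ∈ Finset.range m, g (m + k + 1)
      ≤ 2 * T * L / (abar ^ 2 * (n:ℝ) ^ 2) + 8 * T * L / (abar ^ 2 * (n:ℝ) ^ 2) :=
        add_le_add hfine hcoarse
    _ = 10 * T * L / (abar ^ 2 * (n:ℝ) ^ 2) := by ring
    _ ≤ 1000 * (T + 1) / abar ^ 2 * (((n:ℝ)) ^ 2)⁻¹ * L := by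
        rw [show 1000 * (T + 1) / abar ^ 2 * (((n:ℝ)) ^ 2)⁻¹ * L
          = 1000 * (T + 1) * L / (abar ^ 2 * (n:ℝ) ^ 2) by ring]
        rw [div_le_div_iff₀ (by positivity) (by positivity)]
        have h10 := mul_le_mul_of_nonneg_right (mul_le_mul_of_nonneg_right
          (show 10 * T ≤ 1000 * (T + 1) by linarith) hLpos.le)
          (by positivity : (0:ℝ) ≤ abar ^ 2 * (n:ℝ) ^ 2)
        linarith
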